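/- Let t, a, b ∈ k with b ≠ 0, and consider the conics C = {[x:y:z] ∈ ℙ²(k) : x² + txy + ay² − byz = 0} and D = {[x:y:z] ∈ ℙ²(k) : x² − yz = 0}, which are tangent at [0:0:1]. Set Δ = t² − 4a(1−b). Then the set C ∩ D has exactly 3 points if b ≠ 1 and Δ ≠ 0; exactly 2 points if b ≠ 1 and Δ = 0; exactly 2 points if b = 1 and t ≠ 0; and exactly 1 point if b = 1, t = 0, and a ≠ 0. -/

import Mathlib

open Projectivization


/-- **Number of intersection points of a pair of tangent conics.**
For the tangent conics `C : x² + txy + ay² − byz = 0` and `D : x² − yz = 0` (tangent at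
`[0:0:1]`, `b ≠ 0`) with `Δ = t² − 4a(1−b)`, the set `C ∩ D` has exactly `3` points if `b ≠ 1`
and `Δ ≠ 0` (intersection type `(2,1,1)`), exactly `2` points if `b ≠ 1` and `Δ = 0` (type
`(2,2)`), exactly `2` points if `b = 1` and `t ≠ 0` (type `(3,1)`), and exactly `1` point if
`b = 1`, `t = 0`, `a ≠ 0` (type `(4)`). -/
theorem tangent_conics_intersection_count {k : Type*} [Field k] [IsAlgClosed k]
    (hchar : (2 : k) ≠ 0) (t a b : k) (hb : b ≠ 0)
    (C D : Set (Projectivization k (Fin 3 → k)))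
    (hC : C = {P | P.rep 0 ^ 2 + t * (P.rep 0 * P.rep 1) + a * P.rep 1 ^ 2
      - b * (P.rep 1 * P.rep 2) = 0})
    (hD : D = {P | P.rep 0 ^ 2 - P.rep 1 * P.rep 2 = 0}) :
    (b ≠ 1 → t ^ 2 - 4 * a * (1 - b) ≠ 0 → (C ∩ D).ncard = 3) ∧
    (b ≠ 1 → t ^ 2 - 4 * a * (1 - b) = 0 → (C ∩ D).ncard = 2) ∧
    (b = 1 → t ≠ 0 → (C ∩ D).ncard = 2) ∧
    (b = 1 → t = 0 → a ≠ 0 → (C ∩ D).ncard = 1) := by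
  classical
  have h3 : ∀ (x : k), (![x, 1, x*x] : Fin 3 → k) ≠ 0 := by
    intro x h; have := congrFun h 1; simp at this
  have hP0v : (![0, 0, 1] : Fin 3 → k) ≠ 0 := by
    intro h; have := congrFun h 2; simp at this
  set f : k → Projectivization k (Fin 3 → k) := fun x => mk k ![x,1,x*x] (h3 x) with hf
  set P₀ : Projectivization k (Fin 3 → k) := mk k ![0,0,1] hP0v with hP0
  set S : Set k := {x | (1-b)*x^2 + t*x + a = 0} with hS
  -- injectivity of f
  have hinj : Function.Injective f := by
    intro x y hxy
    rw [hf, mk_eq_mk_iff] at hxy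
    obtain ⟨c, hc⟩ := hxy
    have h1 := congrFun hc 1
    simp [Units.smul_def] at h1
    rw [h1] at hc
    have h0 := congrFun hc 0
    simp at h0
    exact h0.symm
  -- P₀ not in range of f
  have hP0f : ∀ x : k, f x ≠ P₀ := by
    intro x hxy
    rw [hf, hP0, mk_eq_mk_iff] at hxy
    obtain ⟨c, hc⟩ := hxy
    have h1 := congrFun hc 1
    simp [Units.smul_def] at h1
  -- main set equality
  have hmain : C ∩ D = insert P₀ (f '' S) := by
    ext P
    constructor
    · rintro ⟨hPC, hPD⟩
      rw [hC] at hPC; rw [hD] at hPD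
      simp only [Set.mem_setOf_eq] at hPC hPD
      by_cases h1 : P.rep 1 = 0
      · left
        have h0 : P.rep 0 = 0 := by
          have : P.rep 0 ^ 2 = 0 := by rw [h1] at hPD; linear_combination hPD
          exact pow_eq_zero_iff (by norm_num) |>.mp this
        have h2 : P.rep 2 ≠ 0 := by
          intro h2
          apply P.rep_nonzero
          funext i; fin_cases i <;> simp [h0, h1, h2]
        rw [← mk_rep P, hP0, mk_eq_mk_iff]
        exact ⟨Units.mk0 (P.rep 2) h2, by funext i; fin_cases i <;> simp [Units.smul_def, h0, h1]⟩
      · right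
        refine ⟨P.rep 0 / P.rep 1, ?_, ?_⟩
        · rw [hS]; simp only [Set.mem_setOf_eq]
          have key : (1-b)*P.rep 0^2 + t*(P.rep 0*P.rep 1) + a*P.rep 1^2 = 0 := by
            linear_combination hPC - b * hPD
          have expand : (1-b)*(P.rep 0/P.rep 1)^2 + t*(P.rep 0/P.rep 1) + a
              = ((1-b)*P.rep 0^2 + t*(P.rep 0*P.rep 1) + a*P.rep 1^2)/P.rep 1^2 := by
            field_simp
          rw [expand, key, zero_div]
        · have heq : mk k ![P.rep 0 / P.rep 1, 1, P.rep 0 / P.rep 1 * (P.rep 0 / P.rep 1)]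
              (h3 _) = mk k P.rep P.rep_nonzero := by
            rw [mk_eq_mk_iff']
            refine ⟨(P.rep 1)⁻¹, ?_⟩
            funext i; fin_cases i
            · show (P.rep 1)⁻¹ * P.rep 0 = P.rep 0 / P.rep 1
              rw [inv_mul_eq_div]
            · show (P.rep 1)⁻¹ * P.rep 1 = 1
              exact inv_mul_cancel₀ h1
            · show (P.rep 1)⁻¹ * P.rep 2 = P.rep 0 / P.rep 1 * (P.rep 0 / P.rep 1)
              field_simp
              linear_combination (-1) * hPD
          exact heq.trans (mk_rep P)
    · intro hP
      rcases hP with hP | ⟨x, hxS, hfx⟩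
      · obtain ⟨c, hc⟩ := exists_smul_eq_mk_rep k (![0,0,1] : Fin 3 → k) hP0v
        have h0 := congrFun hc 0
        have h1 := congrFun hc 1
        simp [Units.smul_def] at h0 h1
        subst hP
        constructor
        · rw [hC]; simp only [Set.mem_setOf_eq, hP0]
          rw [← h0, ← h1]; ring
        · rw [hD]; simp only [Set.mem_setOf_eq, hP0]
          rw [← h0, ← h1]; ring
      · subst hfx
        obtain ⟨c, hc⟩ := exists_smul_eq_mk_rep k (![x,1,x*x] : Fin 3 → k) (h3 x)
        have h0 := congrFun hc 0
        have h1 := congrFun hc 1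
        have h2 := congrFun hc 2
        simp [Units.smul_def] at h0 h1 h2
        rw [hS] at hxS; simp only [Set.mem_setOf_eq] at hxS
        constructor
        · rw [hC]; simp only [Set.mem_setOf_eq, hf]
          rw [← h0, ← h1, ← h2]
          linear_combination (c : k)^2 * hxS
        · rw [hD]; simp only [Set.mem_setOf_eq, hf]
          rw [← h0, ← h1, ← h2]; ring
  -- counting
  have hcount : ∀ (T : Set k), S = T → T.Finite → (C ∩ D).ncard = T.ncard + 1 := by
    intro T hT hTfin
    rw [hmain, hT]
    rw [Set.ncard_insert_of_notMem (by rintro ⟨x, _, hx⟩; exact hP0f x hx)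
      (hTfin.image f)]
    rw [Set.ncard_image_of_injective _ hinj]
  refine ⟨?_, ?_, ?_, ?_⟩
  · -- b ≠ 1, Δ ≠ 0 : 3 points
    intro hb1 hΔ
    have h1b : (1 : k) - b ≠ 0 := sub_ne_zero.mpr (Ne.symm hb1)
    obtain ⟨s, hs⟩ := IsAlgClosed.exists_pow_nat_eq (t ^ 2 - 4 * a * (1 - b)) (n := 2)
      (by norm_num)
    have hd : (2 : k) * (1 - b) ≠ 0 := mul_ne_zero hchar h1b
    have hsne : s ≠ 0 := by rintro rfl; simp at hs; exact hΔ hs.symm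
    set r₁ := (-t + s) / (2 * (1 - b)) with hr₁
    set r₂ := (-t - s) / (2 * (1 - b)) with hr₂
    have hfact : ∀ x : k, (1-b)*x^2 + t*x + a = (1-b)*((x - r₁) * (x - r₂)) := by
      intro x
      rw [hr₁, hr₂]
      field_simp
      ring_nf
      linear_combination hs
    have hkey : ∀ x : k, ((1-b)*x^2 + t*x + a = 0) ↔ ((x - r₁) * (x - r₂) = 0) := by
      intro x
      rw [hfact x, mul_eq_zero, or_iff_right h1b]
    have hSeq : S = {r₁, r₂} := by
      ext x; rw [hS]; simp only [Set.mem_setOf_eq, Set.mem_insert_iff, Set.mem_singleton_iff]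
      rw [hkey x, mul_eq_zero, sub_eq_zero, sub_eq_zero]
    have hr12 : r₁ ≠ r₂ := by
      rw [hr₁, hr₂]
      intro h
      rw [div_eq_div_iff hd hd] at h
      have h2 : (2 * s) * (2 * (1 - b)) = 0 := by linear_combination h
      rcases mul_eq_zero.mp h2 with h' | h'
      · rcases mul_eq_zero.mp h' with h'' | h''
        · exact hchar h''
        · exact hsne h''
      · exact hd h'
    rw [hcount _ hSeq ((Set.finite_singleton r₂).insert r₁)]
    rw [Set.ncard_pair hr12]
  · -- b ≠ 1, Δ = 0 : 2 points
    intro hb1 hΔ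
    have h1b : (1 : k) - b ≠ 0 := sub_ne_zero.mpr (Ne.symm hb1)
    have hd : (2 : k) * (1 - b) ≠ 0 := mul_ne_zero hchar h1b
    set r := -t / (2 * (1 - b)) with hr
    have hfact : ∀ x : k, (1-b)*x^2 + t*x + a = (1-b)*(x - r)^2 := by
      intro x
      rw [hr]
      field_simp
      ring_nf
      linear_combination (-1) * hΔ
    have hSeq : S = {r} := by
      ext x; rw [hS]; simp only [Set.mem_setOf_eq, Set.mem_singleton_iff]
      rw [hfact x, mul_eq_zero, or_iff_right h1b, pow_eq_zero_iff (by norm_num : (2:ℕ) ≠ 0),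
        sub_eq_zero]
    rw [hcount _ hSeq (Set.finite_singleton _), Set.ncard_singleton]
  · -- b = 1, t ≠ 0 : 2 points
    intro hb1 ht
    subst hb1
    have hSeq : S = {-a / t} := by
      ext x; rw [hS]; simp only [Set.mem_setOf_eq, Set.mem_singleton_iff]
      constructor
      · intro h
        field_simp
        linear_combination h
      · rintro rfl
        have : t * (-a / t) = -a := by field_simp [mul_comm]
        rw [this]; ring
    rw [hcount _ hSeq (Set.finite_singleton _), Set.ncard_singleton]
  · -- b = 1, t = 0, a ≠ 0 : 1 point
    intro hb1 ht ha
    subst hb1; subst ht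
    have hSeq : S = ∅ := by
      ext x; rw [hS]; simp only [Set.mem_setOf_eq, Set.mem_empty_iff_false, iff_false]
      intro h
      apply ha
      linear_combination h
    rw [hcount _ hSeq Set.finite_empty, Set.ncard_empty]
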